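/- In the Weyl algebra over F_p with relation [∂, x] = ℏ, the element x^p ∂^p equals the product ∏_{i=0}^{p-1} (x∂ - iℏ), and hence also equals (x∂)^p - ℏ^{p-1}(x∂). -/

import Mathlib

open Polynomial

-- Step 1: univariate factorization over ZMod p
lemma univ_prod (p : ℕ) [Fact p.Prime] :
    ∏ a : ZMod p, ((X : (ZMod p)[X]) - C a) = X ^ p - X := by
  have hp1 : 1 < p := (Fact.out : p.Prime).one_lt
  have hmon : ((X : (ZMod p)[X]) ^ p - X).Monic := by
    apply monic_X_pow_sub
    simpa using (by exact_mod_cast hp1 : (1 : ℕ∞) < p)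
  have hroots : ((X : (ZMod p)[X]) ^ p - X).roots = Finset.univ.val := by
    have := FiniteField.roots_X_pow_card_sub_X (ZMod p)
    rwa [ZMod.card] at this
  have hdeg : ((X : (ZMod p)[X]) ^ p - X).natDegree = p :=
    FiniteField.X_pow_card_sub_X_natDegree_eq _ hp1
  have := prod_multiset_X_sub_C_of_monic_of_roots_card_eq hmon
    (by rw [hroots, hdeg]; simp [ZMod.card])
  rw [hroots] at this
  rw [← this]
  rfl

-- reindex: product over ZMod p vs range p
lemma reindex (p : ℕ) [Fact p.Prime] {M : Type*} [CommMonoid M] (f : ZMod p → M) :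
    ∏ a : ZMod p, f a = ∏ i ∈ Finset.range p, f (i : ZMod p) := by
  have : NeZero p := ⟨(Fact.out : p.Prime).ne_zero⟩
  refine Finset.prod_bij' (fun a _ => a.val) (fun i _ => (i : ZMod p)) ?_ ?_ ?_ ?_ ?_
  · intro a _; exact Finset.mem_range.2 (ZMod.val_lt a)
  · intro i _; exact Finset.mem_univ _
  · intro a _; exact ZMod.natCast_rightInverse a
  · intro i hi; exact ZMod.val_cast_of_lt (Finset.mem_range.1 hi)
  · intro a _; rw [ZMod.natCast_rightInverse a]

-- Step 2: field version
lemma field_ver (p : ℕ) [Fact p.Prime] {F : Type*} [Field F] [CharP F p]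
    (t : F) (ht : t ≠ 0) :
    ∏ i ∈ Finset.range p, ((X : F[X]) - C ((i : F) * t)) = X ^ p - C (t ^ (p - 1)) * X := by
  have hp1 : 1 ≤ p := (Fact.out : p.Prime).one_lt.le
  set φ := ZMod.castHom (dvd_refl p) F with hφ
  have base : ∏ a : ZMod p, ((X : F[X]) - C (φ a)) = X ^ p - X := by
    have := congrArg (Polynomial.map φ) (univ_prod p)
    simpa [Polynomial.map_prod] using this
  have base2 := congrArg (aeval (C t⁻¹ * X : F[X])) base
  rw [map_prod, map_sub, map_pow, aeval_X] at base2
  simp only [map_sub, aeval_X, aeval_C, algebraMap_eq] at base2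
  have hfac : ∀ a : ZMod p,
      C t⁻¹ * X - C (φ a) = C t⁻¹ * ((X : F[X]) - C (φ a * t)) := by
    intro a
    rw [mul_sub, ← C_mul]
    congr 2
    field_simp
  simp only [hfac] at base2
  rw [Finset.prod_mul_distrib, Finset.prod_const, Finset.card_univ, ZMod.card] at base2
  have h1 : ((C t : F[X]) ^ p) * (C t⁻¹ ^ p) = 1 := by
    rw [← mul_pow, ← C_mul, mul_inv_cancel₀ ht, C_1, one_pow]
  have h2 : ((C t : F[X]) ^ p) * C t⁻¹ = C (t ^ (p - 1)) := by
    rw [← C_pow, ← C_mul]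
    congr 1
    field_simp
    rw [← pow_succ', Nat.sub_add_cancel hp1]
  have key : ∏ a : ZMod p, ((X : F[X]) - C (φ a * t)) = X ^ p - C (t ^ (p - 1)) * X := by
    calc ∏ a : ZMod p, ((X : F[X]) - C (φ a * t))
        = ((C t : F[X]) ^ p * C t⁻¹ ^ p) * ∏ a : ZMod p, ((X : F[X]) - C (φ a * t)) := by
          rw [h1, one_mul]
      _ = (C t : F[X]) ^ p * ((C t⁻¹ * X) ^ p - C t⁻¹ * X) := by
          rw [mul_assoc, base2]
      _ = X ^ p - C (t ^ (p - 1)) * X := by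
          rw [mul_sub, mul_pow, ← mul_assoc, h1, one_mul, ← mul_assoc, h2]
  rw [reindex p (fun a => (X : F[X]) - C (φ a * t))] at key
  simpa [map_natCast] using key

-- Step 3: bivariate version over (ZMod p)[X]
lemma bivar (p : ℕ) [Fact p.Prime] :
    ∏ i ∈ Finset.range p,
        ((X : ((ZMod p)[X])[X]) - C ((i : (ZMod p)[X]) * X))
      = X ^ p - C ((X : (ZMod p)[X]) ^ (p - 1)) * X := by
  set A := (ZMod p)[X]
  set F := FractionRing A
  have hinj : Function.Injective (algebraMap A F) := IsFractionRing.injective A F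
  have hchar : CharP F p := charP_of_injective_ringHom hinj p
  have ht : algebraMap A F X ≠ 0 := by
    intro h
    exact X_ne_zero (hinj (by simpa using h))
  have key := field_ver p (F := F) (algebraMap A F X) ht
  apply Polynomial.map_injective (algebraMap A F) hinj
  rw [Polynomial.map_prod]
  simpa [Polynomial.map_sub, Polynomial.map_pow, Polynomial.map_mul, map_natCast, C_eq_natCast] using key

-- Step 4: any commutative ring of characteristic p
lemma comm_key (p : ℕ) [Fact p.Prime] {R : Type*} [CommRing R] [CharP R p] (y h : R) :
    ∏ i ∈ Finset.range p, (y - (i : R) * h) = y ^ p - h ^ (p - 1) * y := by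
  set f0 : ZMod p →+* R := ZMod.castHom (dvd_refl p) R
  set f1 : (ZMod p)[X] →+* R := eval₂RingHom f0 h
  set f2 : ((ZMod p)[X])[X] →+* R := eval₂RingHom f1 y
  have := congrArg f2 (bivar p)
  rw [map_prod, map_sub, map_pow] at this
  simp only [coe_eval₂RingHom, eval₂_X, eval₂_C, map_sub, map_mul, map_natCast,
    eval₂_pow, f2, f1] at this
  convert this using 2

lemma list_of_finset {M : Type*} [CommMonoid M] (n : ℕ) (f : ℕ → M) :
    ∏ i ∈ Finset.range n, f i = ((List.range n).map f).prod := by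
  rw [Finset.prod, Finset.range_val, ← Multiset.coe_range, Multiset.map_coe, Multiset.prod_coe]

-- Step 5: noncommutative ring, commuting elements, list product
lemma noncomm_key (p : ℕ) (hp : p.Prime) {D : Type*} [Ring D] [CharP D p]
    (y h : D) (hyh : Commute h y) :
    ((List.range p).map (fun (i : ℕ) => y - (i : D) * h)).prod
      = y ^ p - h ^ (p - 1) * y := by
  haveI : Fact p.Prime := ⟨hp⟩
  set f0 : ZMod p →+* D := ZMod.castHom (dvd_refl p) D with hf0
  have hc0 : ∀ (a : ZMod p) (z : D), Commute (f0 a) z := by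
    intro a z
    have ha : ((a.val : ℕ) : ZMod p) = a := ZMod.natCast_rightInverse a
    rw [← ha, map_natCast]
    exact Nat.cast_commute _ _
  set f1 : (ZMod p)[X] →+* D := eval₂RingHom' f0 h (fun a => hc0 a h) with hf1
  have hc1 : ∀ q : (ZMod p)[X], Commute (f1 q) y := by
    intro q
    induction q using Polynomial.induction_on' with
    | add a b ha hb => rw [map_add]; exact ha.add_left hb
    | monomial n a =>
      have : f1 ((monomial n) a) = f0 a * h ^ n := by
        simp [hf1, eval₂RingHom', eval₂_monomial]
      rw [this]
      exact (hc0 a y).mul_left (hyh.pow_left n)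
  set f2 : ((ZMod p)[X])[X] →+* D := eval₂RingHom' f1 y hc1 with hf2
  have key := bivar p
  rw [list_of_finset] at key
  have key2 := congrArg f2 key
  rw [map_list_prod, List.map_map] at key2
  have hfX : f1 X = h := by simp [hf1, eval₂RingHom']
  have hf2X : f2 X = y := by simp [hf2, eval₂RingHom']
  have hf2C : ∀ q, f2 (C q) = f1 q := by intro q; simp [hf2, eval₂RingHom']
  rw [map_sub, map_pow, map_mul, hf2X, hf2C, map_pow, hfX] at key2
  rw [← key2]
  congr 1
  apply List.map_congr_left
  intro i _
  simp only [Function.comp_apply, map_sub, map_mul, hf2X, hf2C, map_natCast, hfX]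

section weyl
variable {D : Type*} [Ring D] (x d h : D)

lemma dnx (rel : d * x = x * d + h) (hhd : Commute h d) :
    ∀ n : ℕ, d ^ (n + 1) * x = x * d ^ (n + 1) + (n + 1) • (h * d ^ n) := by
  intro n
  induction n with
  | zero => simpa using rel
  | succ m ih =>
    rw [pow_succ' d (m + 1), mul_assoc, ih, mul_add]
    rw [mul_smul_comm]
    rw [← mul_assoc d h, ← hhd.eq, mul_assoc h d, ← pow_succ']
    rw [← mul_assoc d x, rel, add_mul, mul_assoc x d, ← pow_succ']
    rw [add_assoc, succ_nsmul (h * d ^ (m + 1)) (m + 1), add_comm (h * d ^ (m + 1))]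

lemma step (rel : d * x = x * d + h) (hhd : Commute h d) (n : ℕ) :
    (x ^ n * d ^ n) * (x * d - n • h) = x ^ (n + 1) * d ^ (n + 1) := by
  cases n with
  | zero => simp
  | succ m =>
    have hdm := dnx x d h rel hhd m
    rw [mul_sub, mul_smul_comm]
    have h1 : x ^ (m+1) * d ^ (m+1) * (x * d) = x ^ (m+1) * (d ^ (m+1) * x) * d := by
      noncomm_ring
    rw [h1, hdm, mul_add, add_mul]
    have h2 : x ^ (m+1) * (x * d ^ (m+1)) * d = x ^ (m+2) * d ^ (m+2) := by
      noncomm_ring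
    rw [h2, mul_smul_comm, smul_mul_assoc]
    have h3 : x ^ (m+1) * (h * d ^ m) * d = x ^ (m+1) * d ^ (m+1) * h := by
      rw [mul_assoc (x ^ (m+1)), mul_assoc h, ← pow_succ, (hhd.pow_right (m+1)).eq,
        ← mul_assoc]
    rw [h3, add_sub_cancel_right]

lemma part1 (rel : d * x = x * d + h) (hhd : Commute h d) (n : ℕ) :
    x ^ n * d ^ n = ((List.range n).map (fun (i : ℕ) => x * d - (i : D) * h)).prod := by
  induction n with
  | zero => simp
  | succ m ih =>
    rw [List.range_succ, List.map_append, List.prod_append, ← ih]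
    simp only [List.map_cons, List.map_nil, List.prod_cons, List.prod_nil, mul_one]
    rw [← step x d h rel hhd m, nsmul_eq_mul]

end weyl

/-- In the Weyl algebra over `F_p` with relation `[∂, x] = ℏ`, the element
`x^p ∂^p` equals `∏_{i=0}^{p-1} (x∂ - iℏ)`, and hence also equals
`(x∂)^p - ℏ^{p-1}(x∂)`. -/
theorem stmt0 (p : ℕ) (hp : p.Prime) {D : Type*} [Ring D] [CharP D p]
    (x d h : D) (rel : d * x - x * d = h)
    (hhx : Commute h x) (hhd : Commute h d) :
    x ^ p * d ^ p = ((List.range p).map (fun (i : ℕ) => x * d - (i : D) * h)).prod ∧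
    ((List.range p).map (fun (i : ℕ) => x * d - (i : D) * h)).prod
      = (x * d) ^ p - h ^ (p - 1) * (x * d) := by
  have rel' : d * x = x * d + h := by rw [← rel]; abel
  refine ⟨part1 x d h rel' hhd p, ?_⟩
  exact noncomm_key p hp (x * d) h (hhx.mul_right hhd)
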